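/- For every integer m ≥ 0 and all complex numbers a, b with Re(a) > 0 and Re(b) > 0, the integral ∫_0^∞ x^{a-1} (1+x²)^{-(a+b)/2} · [ ((1+ix)/√(1+x²))^{-m} + ((1-ix)/√(1+x²))^{-m} ] dx converges absolutely and equals Σ_{j=0}^{⌊m/2⌋} C(m,2j) · (-1)^j · Γ(a/2 + j) · Γ((m+b)/2 - j) / Γ((m+a+b)/2), where C(m,k) is the binomial coefficient. -/

import Mathlib

open MeasureTheory

section Aux
open Set Complex

lemma cpow_real_mul {x : ℝ} (hx : 0 < x) (y : ℝ) (z : ℂ) :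
    (x : ℂ) ^ ((y : ℂ) * z) = ((x : ℂ) ^ (y : ℂ)) ^ z := by
  apply Complex.cpow_mul
  · simp [Complex.mul_im, Complex.log_im, Complex.arg_ofReal_of_nonneg hx.le]
    exact Real.pi_pos
  · simp [Complex.mul_im, Complex.log_im, Complex.arg_ofReal_of_nonneg hx.le]
    exact Real.pi_pos.le

lemma inv_cpow_pos {x : ℝ} (hx : 0 < x) (z : ℂ) :
    ((x : ℂ)⁻¹) ^ z = (x : ℂ) ^ (-z) := by
  rw [Complex.inv_cpow _ _ (by rw [Complex.arg_ofReal_of_nonneg hx.le]; exact Real.pi_ne_zero.symm),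
    ← Complex.cpow_neg]

lemma beta_Ioi (u v : ℂ) (hu : 0 < u.re) (hv : 0 < v.re) :
    IntegrableOn (fun x : ℝ => (x : ℂ) ^ (u - 1) * (1 + (x : ℂ) ^ 2) ^ (-(u + v) / 2)) (Ioi 0) ∧
    ∫ x in Ioi (0:ℝ), (x : ℂ) ^ (u - 1) * (1 + (x : ℂ) ^ 2) ^ (-(u + v) / 2)
      = Complex.Gamma (u / 2) * Complex.Gamma (v / 2) / (2 * Complex.Gamma ((u + v) / 2)) := by
  set α := u / 2 with hα'
  set β := v / 2 with hβ'
  have hα : 0 < α.re := by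
    rw [hα', show (2:ℂ) = ((2:ℝ):ℂ) by norm_num, Complex.div_ofReal_re]; linarith
  have hβ : 0 < β.re := by
    rw [hβ', show (2:ℂ) = ((2:ℝ):ℂ) by norm_num, Complex.div_ofReal_re]; linarith
  set g : ℝ → ℝ := fun x => x ^ 2 / (1 + x ^ 2) with hg
  set g' : ℝ → ℝ := fun x => 2 * x / (1 + x ^ 2) ^ 2 with hg'
  set h : ℝ → ℂ := fun y => (y : ℂ) ^ (α - 1) * ((1 : ℂ) - (y : ℂ)) ^ (β - 1) with hh
  set f : ℝ → ℂ := fun x => (x : ℂ) ^ (u - 1) * (1 + (x : ℂ) ^ 2) ^ (-(u + v) / 2) with hf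
  have hderiv : ∀ x ∈ Ioi (0:ℝ), HasDerivWithinAt g (g' x) (Ioi 0) x := by
    intro x _
    have hne : (1 + x ^ 2) ≠ 0 := by positivity
    have h1 : HasDerivAt (fun x : ℝ => x ^ 2) (2 * x) x := by
      simpa using hasDerivAt_pow 2 x
    have h2 : HasDerivAt (fun x : ℝ => 1 + x ^ 2) (2 * x) x := by
      exact h1.const_add (1:ℝ)
    have := h1.div h2 hne
    convert this.hasDerivWithinAt using 1
    show 2 * x / (1 + x ^ 2) ^ 2 = _
    congr 1
    ring
    all_goals rfl
  have hinj : InjOn g (Ioi 0) := by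
    intro x hx y hy hxy
    simp only [hg, mem_Ioi] at *
    have h1 : x ^ 2 * (1 + y ^ 2) = y ^ 2 * (1 + x ^ 2) := by
      rw [div_eq_div_iff (by positivity) (by positivity)] at hxy
      linarith [hxy]
    nlinarith [h1, hx, hy]
  have himg : g '' Ioi 0 = Ioo 0 1 := by
    ext y
    constructor
    · rintro ⟨x, hx, rfl⟩
      simp only [mem_Ioi] at hx
      constructor
      · positivity
      · rw [div_lt_one (by positivity)]; nlinarith
    · intro hy
      obtain ⟨hy0, hy1⟩ := hy
      refine ⟨Real.sqrt (y / (1 - y)), ?_, ?_⟩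
      · exact Real.sqrt_pos.mpr (div_pos hy0 (by linarith))
      · have hsq : Real.sqrt (y / (1 - y)) ^ 2 = y / (1 - y) :=
          Real.sq_sqrt (le_of_lt (div_pos hy0 (by linarith)))
        simp only [hg, hsq]
        have h1y : (1 : ℝ) - y ≠ 0 := by linarith
        field_simp
        ring
  have key : ∀ x ∈ Ioi (0:ℝ), |g' x| • h (g x) = 2 * f x := by
    intro x hx
    simp only [mem_Ioi] at hx
    have hc : (0:ℝ) < 1 + x ^ 2 := by positivity
    have hcne : ((1 + x ^ 2 : ℝ) : ℂ) ≠ 0 := by exact_mod_cast hc.ne'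
    have hxne : (x : ℂ) ≠ 0 := by exact_mod_cast hx.ne'
    have habs : |g' x| = 2 * x / (1 + x ^ 2) ^ 2 := abs_of_pos (by positivity)
    have h1g : (1 : ℝ) - g x = (1 + x ^ 2)⁻¹ := by
      simp only [hg]; field_simp; ring
    have hgx : g x = x ^ 2 * (1 + x ^ 2)⁻¹ := by simp only [hg]; ring
    have e1 : ((g x : ℝ) : ℂ) ^ (α - 1)
        = (x : ℂ) ^ (u - 2) * ((1 + x ^ 2 : ℝ) : ℂ) ^ (-(α - 1)) := by
      rw [hgx, Complex.ofReal_mul, Complex.mul_cpow_ofReal_nonneg (by positivity) (by positivity)]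
      congr 1
      · rw [Complex.ofReal_pow,
          show ((x:ℂ)) ^ (2:ℕ) = (x:ℂ) ^ ((2:ℝ):ℂ) by norm_num,
          ← cpow_real_mul hx 2 (α - 1)]
        congr 1
        rw [hα']; push_cast; ring
      · rw [Complex.ofReal_inv]
        exact inv_cpow_pos hc _
    have e2 : ((1:ℂ) - ((g x : ℝ) : ℂ)) ^ (β - 1) = ((1 + x ^ 2 : ℝ) : ℂ) ^ (-(β - 1)) := by
      rw [show (1:ℂ) - ((g x : ℝ) : ℂ) = ((1 - g x : ℝ) : ℂ) by push_cast; ring,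
        h1g, Complex.ofReal_inv]
      exact inv_cpow_pos hc _
    have e4 : ((((1 + x ^ 2 : ℝ) : ℂ)) ^ (2:ℕ))⁻¹ = ((1 + x ^ 2 : ℝ) : ℂ) ^ (-((2:ℝ):ℂ)) := by
      rw [← inv_cpow_pos hc, show ((2:ℝ):ℂ) = ((2:ℕ):ℂ) by norm_num, Complex.cpow_natCast,
        inv_pow]
    have e5 : ((1 + x ^ 2 : ℝ) : ℂ) ^ (-((2:ℝ):ℂ)) * (((1 + x ^ 2 : ℝ) : ℂ) ^ (-(α - 1))
        * ((1 + x ^ 2 : ℝ) : ℂ) ^ (-(β - 1))) = ((1 + x ^ 2 : ℝ) : ℂ) ^ (-(u + v) / 2) := by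
      rw [← Complex.cpow_add _ _ hcne, ← Complex.cpow_add _ _ hcne]
      congr 1
      rw [hα', hβ']; push_cast; ring
    have e6 : (x : ℂ) * (x : ℂ) ^ (u - 2) = (x : ℂ) ^ (u - 1) := by
      rw [show (x:ℂ) * (x:ℂ) ^ (u - 2) = (x:ℂ) ^ (1:ℂ) * (x:ℂ) ^ (u-2) by rw [Complex.cpow_one],
        ← Complex.cpow_add _ _ hxne]
      congr 1; ring
    have hcast : ((1 + x ^ 2 : ℝ) : ℂ) = 1 + (x:ℂ) ^ 2 := by push_cast; ring
    simp only [hh, hf]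
    rw [e1, e2, Complex.real_smul, habs, Complex.ofReal_div, Complex.ofReal_mul,
      Complex.ofReal_pow, Complex.ofReal_ofNat, div_eq_mul_inv, e4,
      show (1:ℂ) + (x:ℂ) ^ 2 = ((1 + x ^ 2 : ℝ) : ℂ) from hcast.symm, ← e6, ← e5]
    ring
  have hbeta_int : IntegrableOn h (Ioo 0 1) :=
    (Complex.betaIntegral_convergent hα hβ).1.mono_set Ioo_subset_Ioc_self
  have hiff := integrableOn_image_iff_integrableOn_abs_deriv_smul measurableSet_Ioi hderiv hinj h
  rw [himg] at hiff
  have hint2 : IntegrableOn (fun x => |g' x| • h (g x)) (Ioi 0) := hiff.mp hbeta_int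
  have hcong : (fun x => |g' x| • h (g x)) =ᵐ[volume.restrict (Ioi 0)] fun x => 2 * f x := by
    exact (ae_restrict_iff' measurableSet_Ioi).mpr (ae_of_all _ key)
  have hint3 : IntegrableOn (fun x => 2 * f x) (Ioi 0) := hint2.congr hcong
  have hintf : IntegrableOn f (Ioi 0) := by
    have h2 := hint3.const_mul (2⁻¹ : ℂ)
    have : (fun x => (2⁻¹:ℂ) * (2 * f x)) = f := funext fun x => by rw [← mul_assoc]; norm_num
    rwa [this] at h2
  refine ⟨hintf, ?_⟩
  have hval : ∫ x in Ioo (0:ℝ) 1, h x = ∫ x in Ioi (0:ℝ), |g' x| • h (g x) := by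
    rw [← himg]
    exact integral_image_eq_integral_abs_deriv_smul measurableSet_Ioi hderiv hinj h
  have hBeta : Complex.betaIntegral α β = ∫ x in Ioo (0:ℝ) 1, h x := by
    rw [Complex.betaIntegral, intervalIntegral.integral_of_le zero_le_one,
      MeasureTheory.integral_Ioc_eq_integral_Ioo]
  have h2f : ∫ x in Ioi (0:ℝ), |g' x| • h (g x) = 2 * ∫ x in Ioi (0:ℝ), f x := by
    rw [integral_congr_ae hcong]
    exact integral_const_mul 2 f
  have hΓ := Complex.Gamma_mul_Gamma_eq_betaIntegral hα hβ
  have hΓne : Complex.Gamma (α + β) ≠ 0 := by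
    apply Complex.Gamma_ne_zero
    intro n hcon
    have := congrArg Complex.re hcon
    simp only [Complex.add_re, Complex.neg_re, Complex.natCast_re] at this
    have hn : (0:ℝ) ≤ (n:ℝ) := Nat.cast_nonneg n
    linarith
  have hkey : 2 * ∫ x in Ioi (0:ℝ), f x
      = Complex.Gamma α * Complex.Gamma β / Complex.Gamma (α + β) := by
    rw [← h2f, ← hval, ← hBeta, hΓ]
    rw [mul_comm, mul_div_assoc, div_self hΓne, mul_one]
  have hαβ : α + β = (u + v) / 2 := by rw [hα', hβ']; ring
  rw [← hαβ]
  have h2ne : (2:ℂ) ≠ 0 := two_ne_zero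
  field_simp at hkey ⊢
  linear_combination hkey

lemma sum_even (m : ℕ) (z : ℂ) :
    (1 + z) ^ m + (1 - z) ^ m
      = ∑ j ∈ Finset.range (m / 2 + 1), 2 * (m.choose (2 * j) : ℂ) * z ^ (2 * j) := by
  have h1 : (1 + z) ^ m = ∑ k ∈ Finset.range (m + 1), z ^ k * 1 ^ (m - k) * (m.choose k : ℂ) := by
    rw [add_comm]; exact add_pow z 1 m
  have h2 : (1 - z) ^ m
      = ∑ k ∈ Finset.range (m + 1), (-z) ^ k * 1 ^ (m - k) * (m.choose k : ℂ) := by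
    rw [sub_eq_add_neg, add_comm]; exact add_pow (-z) 1 m
  rw [h1, h2, ← Finset.sum_add_distrib]
  rw [show (∑ k ∈ Finset.range (m + 1),
      (z ^ k * 1 ^ (m - k) * (m.choose k : ℂ) + (-z) ^ k * 1 ^ (m - k) * (m.choose k : ℂ)))
    = ∑ k ∈ Finset.range (m + 1),
      (if Even k then 2 * (m.choose k : ℂ) * z ^ k else 0) from
    Finset.sum_congr rfl fun k _ => by
      rcases Nat.even_or_odd k with he | ho
      · rw [if_pos he, he.neg_pow]; ring
      · rw [if_neg (Nat.not_even_iff_odd.mpr ho), ho.neg_pow]; ring]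
  rw [← Finset.sum_filter]
  refine Finset.sum_nbij' (fun k => k / 2) (fun j => 2 * j) ?_ ?_ ?_ ?_ ?_
  · intro k hk
    simp only [Finset.mem_filter, Finset.mem_range] at hk
    simp only [Finset.mem_range]
    omega
  · intro j hj
    simp only [Finset.mem_range] at hj
    simp only [Finset.mem_filter, Finset.mem_range]
    constructor
    · omega
    · exact even_two_mul j
  · intro k hk
    simp only [Finset.mem_filter, Finset.mem_range] at hk
    obtain ⟨-, he⟩ := hk
    rw [Nat.even_iff] at he
    beta_reduce
    omega
  · intro j _
    beta_reduce
    omega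
  · intro k hk
    simp only [Finset.mem_filter, Finset.mem_range] at hk
    obtain ⟨-, he⟩ := hk
    rw [Nat.even_iff] at he
    beta_reduce
    have : 2 * (k / 2) = k := by omega
    rw [this]

end Aux

open Set Complex in
/-- The generalized beta function `𝓑_{+1,m}(a,b)`: absolute convergence and explicit
evaluation as a finite sum of Gamma quotients, for `Re a > 0`, `Re b > 0`. -/
theorem stmt_3 (m : ℕ) (a b : ℂ) (ha : 0 < a.re) (hb : 0 < b.re) :
    IntegrableOn (fun x : ℝ =>
      (x : ℂ) ^ (a - 1) * (1 + (x : ℂ) ^ 2) ^ (-(a + b) / 2) *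
        (((1 + Complex.I * (x : ℂ)) / (Real.sqrt (1 + x ^ 2) : ℂ)) ^ (-(m : ℂ)) +
          ((1 - Complex.I * (x : ℂ)) / (Real.sqrt (1 + x ^ 2) : ℂ)) ^ (-(m : ℂ))))
      (Set.Ioi 0) ∧
    (∫ x in Set.Ioi (0 : ℝ),
        (x : ℂ) ^ (a - 1) * (1 + (x : ℂ) ^ 2) ^ (-(a + b) / 2) *
          (((1 + Complex.I * (x : ℂ)) / (Real.sqrt (1 + x ^ 2) : ℂ)) ^ (-(m : ℂ)) +
            ((1 - Complex.I * (x : ℂ)) / (Real.sqrt (1 + x ^ 2) : ℂ)) ^ (-(m : ℂ))))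
      = ∑ j ∈ Finset.range (m / 2 + 1),
          (Nat.choose m (2 * j) : ℂ) * (-1 : ℂ) ^ j *
            (Complex.Gamma (a / 2 + (j : ℂ)) * Complex.Gamma (((m : ℂ) + b) / 2 - (j : ℂ)) /
              Complex.Gamma (((m : ℂ) + a + b) / 2)) := by
  set F : ℕ → ℝ → ℂ := fun j x => (x : ℂ) ^ ((a + 2 * (j:ℂ)) - 1) *
      (1 + (x : ℂ) ^ 2) ^ (-((a + 2 * (j:ℂ)) + (b + (m:ℂ) - 2 * (j:ℂ))) / 2) with hF
  have hbeta : ∀ j ∈ Finset.range (m / 2 + 1),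
      IntegrableOn (F j) (Ioi 0) ∧
      ∫ x in Ioi (0:ℝ), F j x = Complex.Gamma ((a + 2 * (j:ℂ)) / 2)
        * Complex.Gamma ((b + (m:ℂ) - 2 * (j:ℂ)) / 2)
        / (2 * Complex.Gamma (((a + 2 * (j:ℂ)) + (b + (m:ℂ) - 2 * (j:ℂ))) / 2)) := by
    intro j hj
    simp only [Finset.mem_range] at hj
    have h2jm : (2 * j : ℕ) ≤ m := by omega
    have hre1 : 0 < (a + 2 * (j:ℂ)).re := by
      rw [show a + 2 * (j:ℂ) = a + ((2 * j : ℕ) : ℝ) by push_cast; ring, Complex.add_re,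
        Complex.ofReal_re]
      positivity
    have hre2 : 0 < (b + (m:ℂ) - 2 * (j:ℂ)).re := by
      rw [show b + (m:ℂ) - 2 * (j:ℂ) = b + (((m : ℝ) - (2 * j : ℕ)) : ℝ) by push_cast; ring,
        Complex.add_re, Complex.ofReal_re]
      have : ((2 * j : ℕ) : ℝ) ≤ (m : ℝ) := by exact_mod_cast h2jm
      linarith
    exact beta_Ioi _ _ hre1 hre2
  have key : ∀ x ∈ Ioi (0:ℝ),
      (x : ℂ) ^ (a - 1) * (1 + (x : ℂ) ^ 2) ^ (-(a + b) / 2) *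
        (((1 + Complex.I * (x : ℂ)) / (Real.sqrt (1 + x ^ 2) : ℂ)) ^ (-(m : ℂ)) +
          ((1 - Complex.I * (x : ℂ)) / (Real.sqrt (1 + x ^ 2) : ℂ)) ^ (-(m : ℂ)))
      = ∑ j ∈ Finset.range (m / 2 + 1),
          (2 * (m.choose (2 * j) : ℂ) * (-1 : ℂ) ^ j) * F j x := by
    intro x hx
    simp only [mem_Ioi] at hx
    have hc : (0:ℝ) < 1 + x ^ 2 := by positivity
    set s : ℝ := Real.sqrt (1 + x ^ 2) with hs
    have hs0 : 0 < s := Real.sqrt_pos.mpr hc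
    have hsq : s ^ 2 = 1 + x ^ 2 := Real.sq_sqrt hc.le
    have hs2 : (s : ℂ) ^ 2 = 1 + (x : ℂ) ^ 2 := by
      calc (s : ℂ) ^ 2 = ((s ^ 2 : ℝ) : ℂ) := by push_cast; ring
        _ = 1 + (x : ℂ) ^ 2 := by rw [hsq]; push_cast; ring
    have hsne : (s : ℂ) ≠ 0 := by exact_mod_cast hs0.ne'
    have hcne : (1 : ℂ) + (x : ℂ) ^ 2 ≠ 0 := by rw [← hs2]; exact pow_ne_zero _ hsne
    have hxne : (x : ℂ) ≠ 0 := by exact_mod_cast hx.ne'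
    have hpow : ∀ z : ℂ, z ^ (-(m : ℂ)) = (z ^ m)⁻¹ := fun z => by
      rw [Complex.cpow_neg, Complex.cpow_natCast]
    have hw : ((1 + Complex.I * (x:ℂ)) / (s:ℂ)) * ((1 - Complex.I * (x:ℂ)) / (s:ℂ)) = 1 := by
      rw [div_mul_div_comm,
        show (1 + Complex.I * (x:ℂ)) * (1 - Complex.I * (x:ℂ)) = 1 + (x:ℂ) ^ 2 by
          linear_combination (-(x:ℂ)^2) * Complex.I_sq,
        show (s:ℂ) * (s:ℂ) = 1 + (x:ℂ) ^ 2 by rw [← hs2]; ring]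
      exact div_self hcne
    have hinv1 : (((1 + Complex.I * (x:ℂ)) / (s:ℂ)) ^ m)⁻¹
        = ((1 - Complex.I * (x:ℂ)) / (s:ℂ)) ^ m :=
      inv_eq_of_mul_eq_one_right (by rw [← mul_pow, hw, one_pow])
    have hinv2 : (((1 - Complex.I * (x:ℂ)) / (s:ℂ)) ^ m)⁻¹
        = ((1 + Complex.I * (x:ℂ)) / (s:ℂ)) ^ m :=
      inv_eq_of_mul_eq_one_right (by rw [← mul_pow, mul_comm ((1 - Complex.I * (x:ℂ)) / (s:ℂ)), hw, one_pow])
    have hsm : (((s:ℂ)) ^ m)⁻¹ = (1 + (x:ℂ) ^ 2) ^ (-((m:ℂ) / 2)) := by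
      have h1 : (s : ℂ) = ((1 + x ^ 2 : ℝ) : ℂ) ^ (((1/2 : ℝ)) : ℂ) := by
        rw [hs, Real.sqrt_eq_rpow, Complex.ofReal_cpow hc.le]
      rw [← Complex.cpow_natCast ((s:ℂ)) m, h1, ← cpow_real_mul hc (1/2) (m:ℂ),
        ← Complex.cpow_neg]
      rw [show ((1 + x ^ 2 : ℝ) : ℂ) = 1 + (x:ℂ) ^ 2 by push_cast; ring]
      congr 1
      push_cast
      ring
    have hbr : ((1 + Complex.I * (x:ℂ)) / (s:ℂ)) ^ (-(m : ℂ))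
          + ((1 - Complex.I * (x:ℂ)) / (s:ℂ)) ^ (-(m : ℂ))
        = (∑ j ∈ Finset.range (m / 2 + 1),
            2 * (m.choose (2 * j) : ℂ) * ((-1 : ℂ) ^ j * (x:ℂ) ^ (2 * j))) * (((s:ℂ)) ^ m)⁻¹ := by
      rw [hpow, hpow, hinv1, hinv2, div_pow, div_pow, ← add_div, div_eq_mul_inv]
      congr 1
      rw [add_comm ((1 - Complex.I * (x:ℂ)) ^ m), sum_even m (Complex.I * (x:ℂ))]
      refine Finset.sum_congr rfl fun j _ => ?_
      rw [pow_mul, show (Complex.I * (x:ℂ)) ^ 2 = -((x:ℂ) ^ 2) by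
          rw [mul_pow, Complex.I_sq]; ring,
        neg_pow, ← pow_mul]
    rw [hbr, hsm, Finset.sum_mul, Finset.mul_sum]
    refine Finset.sum_congr rfl fun j _ => ?_
    simp only [hF]
    have hx1 : (x:ℂ) ^ (a + 2 * (j:ℂ) - 1) = (x:ℂ) ^ (a - 1) * (x:ℂ) ^ (2 * j) := by
      rw [← Complex.cpow_natCast (x:ℂ) (2 * j), ← Complex.cpow_add _ _ hxne]
      congr 1
      push_cast
      ring
    have hc1 : (1 + (x:ℂ) ^ 2) ^ (-((a + 2 * (j:ℂ)) + (b + (m:ℂ) - 2 * (j:ℂ))) / 2)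
        = (1 + (x:ℂ) ^ 2) ^ (-(a + b) / 2) * (1 + (x:ℂ) ^ 2) ^ (-((m:ℂ) / 2)) := by
      rw [← Complex.cpow_add _ _ hcne]
      congr 1
      ring
    rw [hx1, hc1]
    ring
  have hintterm : ∀ j ∈ Finset.range (m / 2 + 1), IntegrableOn
      (fun x : ℝ => (2 * (m.choose (2 * j) : ℂ) * (-1 : ℂ) ^ j) * F j x) (Ioi 0) :=
    fun j hj => ((hbeta j hj).1).const_mul _
  have hsumint : IntegrableOn (fun x : ℝ => ∑ j ∈ Finset.range (m / 2 + 1),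
      (2 * (m.choose (2 * j) : ℂ) * (-1 : ℂ) ^ j) * F j x) (Ioi 0) :=
    integrable_finset_sum _ hintterm
  constructor
  · exact hsumint.congr ((ae_restrict_iff' measurableSet_Ioi).mpr
      (ae_of_all _ fun x hx => (key x hx).symm))
  · rw [setIntegral_congr_fun measurableSet_Ioi fun x hx => key x hx]
    rw [integral_finset_sum _ hintterm]
    refine Finset.sum_congr rfl fun j hj => ?_
    rw [integral_const_mul, (hbeta j hj).2]
    rw [show (a + 2 * (j:ℂ)) / 2 = a / 2 + j by ring,
      show (b + (m:ℂ) - 2 * (j:ℂ)) / 2 = ((m:ℂ) + b) / 2 - j by ring,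
      show ((a + 2 * (j:ℂ)) + (b + (m:ℂ) - 2 * (j:ℂ))) / 2 = ((m:ℂ) + a + b) / 2 by ring]
    ring
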